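/- Let α, β ∈ ℝ with (α,β) ≠ (0,0), let p(t,x,y) := (4πt)^{−1/2}·exp(−(x−y)²/(4t)) be the heat kernel of the real line, fix y < 0, and define E(t,x) := p(t,x,y) + ((β² − α²)/(α² + β²))·p(t,−x,y) for x < 0 and E(t,x) := (2αβ/(α² + β²))·p(t,x,y) for x > 0. Then: (i) for every t > 0 and every x ≠ 0, the heat equation ∂_t E(t,x) = ∂²_x E(t,x) holds; (ii) for every t > 0 the one-sided limits E(t,0⁻), E(t,0⁺), ∂_xE(t,0⁻), ∂_xE(t,0⁺) exist and satisfy the ν-transmission conditions α·E(t,0⁻) = β·E(t,0⁺) and β·∂_xE(t,0⁻) = α·∂_xE(t,0⁺). (Thus the ν-transmission heat kernel is obtained from the free heat kernel by the reflection formulas of the paper.) -/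

import Mathlib

/-- The heat kernel `p(t,x,y) = (4πt)^{-1/2} exp(-(x-y)²/(4t))` of the real
line. -/
noncomputable def heatKer (t x y : ℝ) : ℝ :=
  (4 * Real.pi * t) ^ (-(1 : ℝ) / 2) * Real.exp (-(x - y) ^ 2 / (4 * t))

noncomputable def pX (t y x : ℝ) : ℝ := heatKer t x y * (-(x - y) / (2 * t))

noncomputable def pXX (t y x : ℝ) : ℝ :=
  heatKer t x y * ((x - y) ^ 2 / (4 * t ^ 2) - 1 / (2 * t))

lemma hA (t y x : ℝ) : HasDerivAt (fun x => heatKer t x y) (pX t y x) x := by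
  have h1 : HasDerivAt (fun x : ℝ => -(x - y) ^ 2 / (4 * t))
      (-(2 * (x - y) ^ 1 * 1) / (4 * t)) x :=
    (((hasDerivAt_id x).sub_const y).pow 2).neg.div_const (4 * t)
  have h2 := (h1.exp.const_mul ((4 * Real.pi * t) ^ (-(1 : ℝ) / 2)))
  refine h2.congr_deriv ?_
  unfold pX heatKer
  ring

lemma hD (t y x : ℝ) : HasDerivAt (fun x => pX t y x) (pXX t y x) x := by
  have h1 : HasDerivAt (fun x : ℝ => -(x - y) / (2 * t)) (-1 / (2 * t)) x :=
    ((hasDerivAt_id x).sub_const y).neg.div_const (2 * t)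
  have h2 := (hA t y x).mul h1
  refine h2.congr_deriv ?_
  unfold pXX pX
  ring

lemma hB (t y x : ℝ) (ht : 0 < t) :
    HasDerivAt (fun s => heatKer s x y) (pXX t y x) t := by
  have hpos : 0 < 4 * Real.pi * t := by positivity
  have h1 : HasDerivAt (fun s : ℝ => 4 * Real.pi * s) (4 * Real.pi) t := by
    simpa using (hasDerivAt_id t).const_mul (4 * Real.pi)
  have h2 := h1.rpow_const (p := -(1 : ℝ) / 2) (Or.inl hpos.ne')
  have h3 : HasDerivAt (fun s : ℝ => -(x - y) ^ 2 / (4 * s))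
      ((x - y) ^ 2 / (4 * t ^ 2)) t := by
    have h := (hasDerivAt_inv ht.ne').const_mul (-(x - y) ^ 2 / 4)
    have heq : (fun s : ℝ => -(x - y) ^ 2 / (4 * s))
        = fun s : ℝ => -(x - y) ^ 2 / 4 * s⁻¹ := by funext s; ring
    rw [heq]
    refine h.congr_deriv ?_
    field_simp
  have h4 := h2.mul h3.exp
  have hsplit : (4 * Real.pi * t) ^ (-(1 : ℝ) / 2 - 1)
      = (4 * Real.pi * t) ^ (-(1 : ℝ) / 2) * (4 * Real.pi * t)⁻¹ := by
    rw [show (-(1 : ℝ) / 2 - 1) = (-(1 : ℝ) / 2) + (-1) by ring,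
      Real.rpow_add hpos, Real.rpow_neg_one]
  refine h4.congr_deriv ?_
  unfold pXX heatKer
  rw [hsplit]
  field_simp
  ring

/-- The `ν`-transmission heat kernel on the line, obtained from the free heat
kernel by the reflection formulas: with `y < 0` fixed and
`E(t,x) = p(t,x,y) + ((β²-α²)/(α²+β²)) p(t,-x,y)` for `x < 0`,
`E(t,x) = (2αβ/(α²+β²)) p(t,x,y)` for `x > 0`, the function `E` satisfies the
heat equation `∂_t E = ∂²_x E` off `x = 0` and the `ν`-transmission conditions
`α·E(t,0⁻) = β·E(t,0⁺)`, `β·∂_xE(t,0⁻) = α·∂_xE(t,0⁺)` at `x = 0`. -/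
theorem heat_kernel_transmission (α β : ℝ) (hν : (α, β) ≠ (0, 0))
    (y : ℝ) (hy : y < 0) (E : ℝ → ℝ → ℝ)
    (hEneg : ∀ t > (0 : ℝ), ∀ x < (0 : ℝ),
      E t x = heatKer t x y + ((β ^ 2 - α ^ 2) / (α ^ 2 + β ^ 2)) * heatKer t (-x) y)
    (hEpos : ∀ t > (0 : ℝ), ∀ x > (0 : ℝ),
      E t x = (2 * α * β / (α ^ 2 + β ^ 2)) * heatKer t x y) :
    (∀ t > (0 : ℝ), ∀ x : ℝ, x ≠ 0 → ∃ D : ℝ,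
      HasDerivAt (deriv (fun z => E t z)) D x ∧
      HasDerivAt (fun s => E s x) D t) ∧
    ∀ t > (0 : ℝ), ∃ L₁ L₂ M₁ M₂ : ℝ,
      Filter.Tendsto (E t) (nhdsWithin 0 (Set.Iio 0)) (nhds L₁) ∧
      Filter.Tendsto (E t) (nhdsWithin 0 (Set.Ioi 0)) (nhds L₂) ∧
      Filter.Tendsto (deriv (E t)) (nhdsWithin 0 (Set.Iio 0)) (nhds M₁) ∧
      Filter.Tendsto (deriv (E t)) (nhdsWithin 0 (Set.Ioi 0)) (nhds M₂) ∧
      α * L₁ = β * L₂ ∧ β * M₁ = α * M₂ := by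
  have hs : α ^ 2 + β ^ 2 ≠ 0 := by
    have h : α ≠ 0 ∨ β ≠ 0 := by
      by_contra h
      push_neg at h
      exact hν (by simp [h.1, h.2])
    rcases h with h | h <;> positivity
  set c : ℝ := (β ^ 2 - α ^ 2) / (α ^ 2 + β ^ 2) with hc
  set k : ℝ := 2 * α * β / (α ^ 2 + β ^ 2) with hk
  -- derivative facts for the two branch formulas
  have hfneg' : ∀ (t : ℝ) (z : ℝ),
      HasDerivAt (fun w => heatKer t w y + c * heatKer t (-w) y)
        (pX t y z + c * (pX t y (-z) * (-1))) z := by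
    intro t z
    have h2 : HasDerivAt (fun w : ℝ => heatKer t (-w) y) (pX t y (-z) * (-1)) z := by
      have := (hA t y (-z)).comp z (hasDerivAt_neg z)
      exact this
    exact (hA t y z).add (h2.const_mul c)
  have hfneg'' : ∀ (t : ℝ) (z : ℝ),
      HasDerivAt (fun w => pX t y w + c * (pX t y (-w) * (-1)))
        (pXX t y z + c * pXX t y (-z)) z := by
    intro t z
    have h2 : HasDerivAt (fun w : ℝ => pX t y (-w)) (pXX t y (-z) * (-1)) z := by
      have := (hD t y (-z)).comp z (hasDerivAt_neg z)
      exact this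
    have h3 : HasDerivAt (fun w : ℝ => pX t y (-w) * (-1)) (pXX t y (-z) * (-1) * (-1)) z :=
      h2.mul_const (-1)
    have := (hD t y z).add (h3.const_mul c)
    refine this.congr_deriv ?_
    ring
  have hfpos' : ∀ (t : ℝ) (z : ℝ),
      HasDerivAt (fun w => k * heatKer t w y) (k * pX t y z) z :=
    fun t z => (hA t y z).const_mul k
  have hfpos'' : ∀ (t : ℝ) (z : ℝ),
      HasDerivAt (fun w => k * pX t y w) (k * pXX t y z) z :=
    fun t z => (hD t y z).const_mul k
  constructor
  · -- heat equation off x = 0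
    intro t ht x hx
    rcases hx.lt_or_gt with hxneg | hxpos
    · refine ⟨pXX t y x + c * pXX t y (-x), ?_, ?_⟩
      · have hEf : (fun z => E t z) =ᶠ[nhds x]
            (fun w => heatKer t w y + c * heatKer t (-w) y) := by
          filter_upwards [Iio_mem_nhds hxneg] with z hz
          exact hEneg t ht z hz
        have hde : deriv (fun z => E t z) =ᶠ[nhds x]
            (fun w => pX t y w + c * (pX t y (-w) * (-1))) := by
          have h1 := hEf.deriv
          have h2 : deriv (fun w => heatKer t w y + c * heatKer t (-w) y)
              = fun w => pX t y w + c * (pX t y (-w) * (-1)) :=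
            funext fun z => (hfneg' t z).deriv
          rwa [h2] at h1
        exact (hfneg'' t x).congr_of_eventuallyEq hde
      · have hEt : (fun s => E s x) =ᶠ[nhds t]
            (fun s => heatKer s x y + c * heatKer s (-x) y) := by
          filter_upwards [Ioi_mem_nhds ht] with s hs
          exact hEneg s hs x hxneg
        exact ((hB t y x ht).add ((hB t y (-x) ht).const_mul c)).congr_of_eventuallyEq hEt
    · refine ⟨k * pXX t y x, ?_, ?_⟩
      · have hEf : (fun z => E t z) =ᶠ[nhds x] (fun w => k * heatKer t w y) := by
          filter_upwards [Ioi_mem_nhds hxpos] with z hz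
          exact hEpos t ht z hz
        have hde : deriv (fun z => E t z) =ᶠ[nhds x] (fun w => k * pX t y w) := by
          have h1 := hEf.deriv
          have h2 : deriv (fun w => k * heatKer t w y) = fun w => k * pX t y w :=
            funext fun z => (hfpos' t z).deriv
          rwa [h2] at h1
        exact (hfpos'' t x).congr_of_eventuallyEq hde
      · have hEt : (fun s => E s x) =ᶠ[nhds t] (fun s => k * heatKer s x y) := by
          filter_upwards [Ioi_mem_nhds ht] with s hs
          exact hEpos s hs x hxpos
        exact ((hB t y x ht).const_mul k).congr_of_eventuallyEq hEt
  · -- transmission conditions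
    intro t ht
    refine ⟨heatKer t 0 y + c * heatKer t (-0) y, k * heatKer t 0 y,
      pX t y 0 + c * (pX t y (-0) * (-1)), k * pX t y 0, ?_, ?_, ?_, ?_, ?_, ?_⟩
    · have hcont : ContinuousAt (fun w => heatKer t w y + c * heatKer t (-w) y) 0 :=
        (hfneg' t 0).continuousAt
      refine Filter.Tendsto.congr' ?_ hcont.continuousWithinAt
      filter_upwards [self_mem_nhdsWithin] with z hz
      exact (hEneg t ht z hz).symm
    · have hcont : ContinuousAt (fun w => k * heatKer t w y) 0 :=
        (hfpos' t 0).continuousAt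
      refine Filter.Tendsto.congr' ?_ hcont.continuousWithinAt
      filter_upwards [self_mem_nhdsWithin] with z hz
      exact (hEpos t ht z hz).symm
    · have hcont : ContinuousAt (fun w => pX t y w + c * (pX t y (-w) * (-1))) 0 :=
        (hfneg'' t 0).continuousAt
      refine Filter.Tendsto.congr' ?_ hcont.continuousWithinAt
      filter_upwards [self_mem_nhdsWithin] with z hz
      have hEf : (fun w => E t w) =ᶠ[nhds z]
          (fun w => heatKer t w y + c * heatKer t (-w) y) := by
        filter_upwards [Iio_mem_nhds hz] with w hw
        exact hEneg t ht w hw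
      exact (((hfneg' t z).congr_of_eventuallyEq hEf).deriv).symm
    · have hcont : ContinuousAt (fun w => k * pX t y w) 0 :=
        (hfpos'' t 0).continuousAt
      refine Filter.Tendsto.congr' ?_ hcont.continuousWithinAt
      filter_upwards [self_mem_nhdsWithin] with z hz
      have hEf : (fun w => E t w) =ᶠ[nhds z] (fun w => k * heatKer t w y) := by
        filter_upwards [Ioi_mem_nhds hz] with w hw
        exact hEpos t ht w hw
      exact (((hfpos' t z).congr_of_eventuallyEq hEf).deriv).symm
    · rw [neg_zero, hc, hk]
      field_simp
      ring
    · rw [neg_zero, hc, hk]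
      field_simp
      ring
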